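/- In the rooted capacity model, for every integer i ≥ 0: 2 · #{u ∈ V : L(u) ≤ i and d(u) < d̄_u} ≥ 1 + Z_i − X_{i+1}. -/

import Mathlib

namespace P2P

/-- A walk of length `n` from `r` to `u` in the edge set `E`. -/
def Walk {α : Type*} (E : Finset (α × α)) (r u : α) (n : ℕ) : Prop :=
  ∃ f : ℕ → α, f 0 = r ∧ f n = u ∧ ∀ k < n, (f k, f (k + 1)) ∈ E

/-- Depth of `u` below root `r`: minimal number of edges of a directed walk
(equivalently, of a directed path) from `r` to `u`; `⊤` if unreachable. -/
noncomputable def depth {α : Type*} (E : Finset (α × α)) (r u : α) : ℕ∞ :=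
  sInf {n : ℕ∞ | ∃ m : ℕ, n = (m : ℕ∞) ∧ Walk E r u m}

/-- Out-degree of `u` in `E`. -/
def outDeg {α : Type*} [DecidableEq α] (E : Finset (α × α)) (u : α) : ℕ :=
  (E.filter fun e => e.1 = u).card

/-- In-degree of `u` in `E`. -/
def inDeg {α : Type*} [DecidableEq α] (E : Finset (α × α)) (u : α) : ℕ :=
  (E.filter fun e => e.2 = u).card

lemma walk_zero {α : Type*} (E : Finset (α × α)) (r : α) : Walk E r r 0 :=
  ⟨fun _ => r, rfl, rfl, fun k hk => absurd hk (Nat.not_lt_zero k)⟩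

lemma depth_le_of_walk {α : Type*} {E : Finset (α × α)} {r u : α} {n : ℕ}
    (h : Walk E r u n) : depth E r u ≤ (n : ℕ∞) :=
  sInf_le ⟨n, rfl, h⟩

lemma exists_walk_of_depth_le {α : Type*} {E : Finset (α × α)} {r u : α} {n : ℕ}
    (h : depth E r u ≤ (n : ℕ∞)) : ∃ k ≤ n, Walk E r u k := by
  have hlt : depth E r u < ((n + 1 : ℕ) : ℕ∞) :=
    lt_of_le_of_lt h (by exact_mod_cast Nat.lt_succ_self n)
  obtain ⟨a, ha, hlt'⟩ := sInf_lt_iff.mp hlt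
  obtain ⟨m, rfl, hw⟩ := ha
  have : m < n + 1 := by exact_mod_cast hlt'
  exact ⟨m, Nat.lt_succ_iff.mp this, hw⟩

lemma depth_le_succ_of_edge {α : Type*} {E : Finset (α × α)} {r u v : α}
    (he : (u, v) ∈ E) {n : ℕ} (h : depth E r u ≤ (n : ℕ∞)) :
    depth E r v ≤ ((n + 1 : ℕ) : ℕ∞) := by
  obtain ⟨k, hk, f, hf0, hfk, hstep⟩ := exists_walk_of_depth_le h
  have hw : Walk E r v (k + 1) := by
    refine ⟨fun j => if j = k + 1 then v else f j, by simp [hf0], by simp, ?_⟩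
    intro j hj
    rcases Nat.lt_succ_iff_lt_or_eq.mp hj with hj' | rfl
    · have h1 : j ≠ k + 1 := by omega
      have h2 : j + 1 ≠ k + 1 := by omega
      simpa [h1, h2, show j ≠ k by omega] using hstep j hj'
    · have h1 : j ≠ j + 1 := by omega
      simpa [h1, hfk] using he
  calc depth E r v ≤ ((k + 1 : ℕ) : ℕ∞) := depth_le_of_walk hw
    _ ≤ ((n + 1 : ℕ) : ℕ∞) := by exact_mod_cast Nat.succ_le_succ hk

/-- in the rooted capacity model (at most one incoming edge per
node, none at the root, degree caps `d̄_u ≥ 2`), for every `i ≥ 0`,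
`2·#{u : L(u) ≤ i, d(u) < d̄_u} ≥ 1 + Z_i − X_{i+1}`. -/
theorem available_nodes_lower_bound'
    {α : Type*} [Fintype α] [DecidableEq α]
    (r : α) (E : Finset (α × α))
    (hdist : ∀ e ∈ E, e.1 ≠ e.2)
    (hone : ∀ w : α, inDeg E w ≤ 1)
    (hrootin : inDeg E r = 0)
    (dbar : α → ℕ) (hdbar : ∀ u : α, 2 ≤ dbar u)
    (i : ℕ) :
    (1 : ℤ) + (Nat.card {u : α // depth E r u ≤ (i : ℕ∞)} : ℤ) -
        (Nat.card {u : α // depth E r u = ((i + 1 : ℕ) : ℕ∞)} : ℤ) ≤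
      2 * (Nat.card {u : α // depth E r u ≤ (i : ℕ∞) ∧ outDeg E u < dbar u} : ℤ) := by
  classical
  set A : Finset α := Finset.univ.filter (fun u => depth E r u ≤ (i : ℕ∞)) with hA
  set B : Finset α := Finset.univ.filter (fun u => depth E r u = ((i + 1 : ℕ) : ℕ∞)) with hB
  set S : Finset α := Finset.univ.filter
    (fun u => depth E r u ≤ (i : ℕ∞) ∧ outDeg E u < dbar u) with hS
  have cA : Nat.card {u : α // depth E r u ≤ (i : ℕ∞)} = A.card := by
    simp [hA, Nat.card_eq_fintype_card, Fintype.card_subtype]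
  have cB : Nat.card {u : α // depth E r u = ((i + 1 : ℕ) : ℕ∞)} = B.card := by
    simp [hB, Nat.card_eq_fintype_card, Fintype.card_subtype]
  have cS : Nat.card {u : α // depth E r u ≤ (i : ℕ∞) ∧ outDeg E u < dbar u} = S.card := by
    simp [hS, Nat.card_eq_fintype_card, Fintype.card_subtype]
  rw [cA, cB, cS]
  -- the root is in A
  have hrA : r ∈ A := by
    simp only [hA, Finset.mem_filter, Finset.mem_univ, true_and]
    exact le_trans (depth_le_of_walk (walk_zero E r)) (by exact_mod_cast Nat.zero_le i)
  -- A and B are disjoint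
  have hAB : Disjoint A B := by
    rw [Finset.disjoint_left]
    intro u huA huB
    simp only [hA, hB, Finset.mem_filter, Finset.mem_univ, true_and] at huA huB
    rw [huB] at huA
    exact absurd (by exact_mod_cast huA) (by omega)
  -- edges from A
  set F : Finset (α × α) := E.filter (fun e => e.1 ∈ A) with hF
  -- F.card counts total out-degree over A
  have hFcard : F.card = ∑ u ∈ A, outDeg E u := by
    have hbu : F = A.biUnion (fun u => E.filter (fun e => e.1 = u)) := by
      ext e
      simp only [hF, Finset.mem_filter, Finset.mem_biUnion]
      constructor
      · rintro ⟨heE, heA⟩; exact ⟨e.1, heA, heE, rfl⟩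
      · rintro ⟨u, huA, heE, rfl⟩; exact ⟨heE, huA⟩
    rw [hbu, Finset.card_biUnion]
    · rfl
    · intro u _ v _ huv
      rw [Function.onFun, Finset.disjoint_left]
      intro e he1 he2
      simp only [Finset.mem_filter] at he1 he2
      exact huv (he1.2 ▸ he2.2)
  -- lower bound on F.card
  have hlow : 2 * (A \ S).card ≤ F.card := by
    rw [hFcard]
    calc 2 * (A \ S).card = ∑ _u ∈ A \ S, 2 := by rw [Finset.sum_const]; ring
      _ ≤ ∑ u ∈ A \ S, outDeg E u := by
          apply Finset.sum_le_sum
          intro u hu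
          simp only [hS, hA, Finset.mem_sdiff, Finset.mem_filter, Finset.mem_univ,
            true_and, not_and, not_lt] at hu
          have h2 := hu.2 hu.1
          have := hdbar u
          omega
      _ ≤ ∑ u ∈ A, outDeg E u := Finset.sum_le_sum_of_subset (Finset.sdiff_subset)
  -- upper bound on F.card via injection e ↦ e.2 into (A ∪ B).erase r
  have hup : F.card ≤ ((A ∪ B).erase r).card := by
    apply Finset.card_le_card_of_injOn (fun e => e.2)
    · intro e he
      simp only [hF, Finset.mem_coe, Finset.mem_filter] at he
      obtain ⟨heE, heA⟩ := he
      simp only [hA, Finset.mem_filter, Finset.mem_univ, true_and] at heA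
      have hd2 : depth E r e.2 ≤ ((i + 1 : ℕ) : ℕ∞) := by
        have : (e.1, e.2) ∈ E := by simpa using heE
        exact depth_le_succ_of_edge this heA
      have hner : e.2 ≠ r := by
        intro hr
        have : e ∈ E.filter (fun e => e.2 = r) := Finset.mem_filter.mpr ⟨heE, hr⟩
        have : 0 < inDeg E r := Finset.card_pos.mpr ⟨e, this⟩
        omega
      rw [Finset.mem_coe, Finset.mem_erase]
      refine ⟨hner, ?_⟩
      rw [Finset.mem_union]
      by_cases hle : depth E r e.2 ≤ (i : ℕ∞)
      · left; simp [hA, hle]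
      · right
        simp only [hB, Finset.mem_filter, Finset.mem_univ, true_and]
        refine le_antisymm hd2 ?_
        have hlt : (i : ℕ∞) < depth E r e.2 := lt_of_not_ge hle
        have : ((i : ℕ∞)) + 1 ≤ depth E r e.2 := ENat.add_one_le_iff (by simp) |>.mpr hlt
        calc ((i + 1 : ℕ) : ℕ∞) = (i : ℕ∞) + 1 := by push_cast; rfl
          _ ≤ depth E r e.2 := this
    · intro e he e' he' h2
      simp only [hF, Finset.mem_coe, Finset.mem_filter] at he he'
      by_contra hne
      have h1 : e ∈ E.filter (fun x => x.2 = e.2) := Finset.mem_filter.mpr ⟨he.1, rfl⟩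
      have h2' : e' ∈ E.filter (fun x => x.2 = e.2) :=
        Finset.mem_filter.mpr ⟨he'.1, h2.symm⟩
      have : 1 < inDeg E e.2 := Finset.one_lt_card.mpr ⟨e, h1, e', h2', hne⟩
      have := hone e.2
      omega
  -- erase cardinality
  have hrAB : r ∈ A ∪ B := Finset.mem_union_left B hrA
  have herase : ((A ∪ B).erase r).card = A.card + B.card - 1 := by
    rw [Finset.card_erase_of_mem hrAB, Finset.card_union_of_disjoint hAB]
  -- S ⊆ A
  have hSA : S ⊆ A := by
    intro u hu
    simp only [hS, hA, Finset.mem_filter, Finset.mem_univ, true_and] at hu ⊢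
    exact hu.1
  have hsd : (A \ S).card = A.card - S.card := Finset.card_sdiff_of_subset hSA
  have hABpos : 1 ≤ A.card + B.card := by
    have : 0 < A.card := Finset.card_pos.mpr ⟨r, hrA⟩
    omega
  have key : 2 * (A \ S).card ≤ A.card + B.card - 1 := by
    calc 2 * (A \ S).card ≤ F.card := hlow
      _ ≤ ((A ∪ B).erase r).card := hup
      _ = A.card + B.card - 1 := herase
  have hcardle := Finset.card_le_card hSA
  omega

end P2P
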